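/- Let k ≥ 1 and for i = 1,…,k let hᵢ be the delayed relay with thresholds (-1 + i/k, i/k). Define the macroscopic output w_k[ζ](t) = (1/k)·Σᵢ hᵢ[ζ](t) for a continuous input ζ. If at some time τ the relay output states satisfy the monotone-ordering condition (there is i_k^τ with hᵢ[ζ](τ) = 1 for i < i_k^τ and hᵢ[ζ](τ) = -1 for i > i_k^τ), then this ordering condition persists for all t ≥ τ, and the map from the value of w_k(t) to the k-tuple (h₁[ζ](t),…,h_k[ζ](t)) is a bijection onto the set of k-tuples of the form (1,…,1,-1,…,-1); in particular w_k takes exactly the k+1 values {-1, -1+2/k, …, 1-2/k, 1}. -/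

import Mathlib

open Set Classical

/-- The delayed relay with thresholds `a < b`, applied to a continuous input `z` with initial
output `w₀ ∈ {-1,1}`: the output at time `t` is determined by the sign of the input at the
last time in `[0,t]` at which the input exceeded one of the thresholds (`z < a` or `z > b`);
if the input never exceeded the thresholds, the output is the initial state `w₀`. -/
noncomputable def relay (a b : ℝ) (z : ℝ → ℝ) (w₀ : ℝ) (t : ℝ) : ℝ :=
  if ({s : ℝ | s ∈ Set.Icc 0 t ∧ (z s < a ∨ b < z s)}).Nonempty then
    (if b ≤ z (sSup {s : ℝ | s ∈ Set.Icc 0 t ∧ (z s < a ∨ b < z s)}) then 1 else -1)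
  else w₀

/-- The set of switching times of a relay with thresholds `(a,b)` up to time `t`. -/
def relaySet (z : ℝ → ℝ) (a b t : ℝ) : Set ℝ :=
  {s : ℝ | s ∈ Set.Icc 0 t ∧ (z s < a ∨ b < z s)}

lemma relay_eq (z : ℝ → ℝ) (a b w t : ℝ) :
    relay a b z w t =
      if (relaySet z a b t).Nonempty then
        (if b ≤ z (sSup (relaySet z a b t)) then 1 else -1)
      else w := rfl

lemma relaySet_bddAbove (z : ℝ → ℝ) (a b t : ℝ) : BddAbove (relaySet z a b t) :=
  ⟨t, fun _ hs => hs.1.2⟩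

lemma relaySet_sSup_mem {z : ℝ → ℝ} (hz : Continuous z) {a b t : ℝ}
    (hne : (relaySet z a b t).Nonempty) :
    sSup (relaySet z a b t) ∈ Set.Icc 0 t ∧
      (z (sSup (relaySet z a b t)) ≤ a ∨ b ≤ z (sSup (relaySet z a b t))) := by
  have hcl : sSup (relaySet z a b t) ∈ closure (relaySet z a b t) :=
    csSup_mem_closure hne (relaySet_bddAbove z a b t)
  have hclosed : IsClosed (Set.Icc 0 t ∩ {x : ℝ | z x ≤ a ∨ b ≤ z x}) := by
    apply isClosed_Icc.inter
    have : {x : ℝ | z x ≤ a ∨ b ≤ z x} = z ⁻¹' (Set.Iic a ∪ Set.Ici b) := by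
      ext x; simp [Set.mem_union]
    rw [this]
    exact (isClosed_Iic.union isClosed_Ici).preimage hz
  have hsub : relaySet z a b t ⊆ Set.Icc 0 t ∩ {x : ℝ | z x ≤ a ∨ b ≤ z x} := by
    rintro x ⟨hx1, hx2⟩
    exact ⟨hx1, hx2.imp le_of_lt le_of_lt⟩
  have := closure_minimal hsub hclosed hcl
  exact ⟨this.1, this.2⟩

/-- If the relay with the larger thresholds has a nonempty switching set and output `1`,
then the relay with smaller thresholds has output `1` as well. -/
lemma relay_one_of_higher_one {z : ℝ → ℝ} (hz : Continuous z) {a b a' b' t : ℝ}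
    (hab : a + 1 = b) (haa' : a ≤ a') (hbb' : b < b') {w w' : ℝ}
    (hne' : (relaySet z a' b' t).Nonempty) (h1 : relay a' b' z w' t = 1) :
    relay a b z w t = 1 := by
  set s' := sSup (relaySet z a' b' t) with hs'
  have hkey : b' ≤ z s' := by
    by_contra hcon
    rw [relay_eq, if_pos hne', if_neg hcon] at h1
    norm_num at h1
  obtain ⟨hs'Icc, _⟩ := relaySet_sSup_mem hz hne'
  have hs'S : s' ∈ relaySet z a b t :=
    ⟨hs'Icc, Or.inr (lt_of_lt_of_le hbb' hkey)⟩
  have hne : (relaySet z a b t).Nonempty := ⟨s', hs'S⟩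
  set s := sSup (relaySet z a b t) with hsdef
  have hs's : s' ≤ s := le_csSup (relaySet_bddAbove z a b t) hs'S
  have hgoal : b ≤ z s := by
    by_contra hlt
    push_neg at hlt
    have hza : z s ≤ a := by
      rcases (relaySet_sSup_mem hz hne).2 with h | h
      · exact h
      · exact absurd h (not_le.mpr hlt)
    have hlt' : s' < s := by
      rcases lt_or_eq_of_le hs's with h | h
      · exact h
      · exfalso
        rw [h] at hkey
        linarith
    -- continuity: points near s have z < b
    have hopen : IsOpen (z ⁻¹' Set.Iio b) := (isOpen_Iio).preimage hz
    have hsmem : s ∈ z ⁻¹' Set.Iio b := by simpa using hlt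
    obtain ⟨ε, hε, hball⟩ := Metric.isOpen_iff.mp hopen s hsmem
    have hx0 : max (s - ε) s' < s := max_lt (by linarith) hlt'
    obtain ⟨s₁, hs₁S, hs₁gt⟩ := exists_lt_of_lt_csSup hne hx0
    have hs₁le : s₁ ≤ s := le_csSup (relaySet_bddAbove z a b t) hs₁S
    have hd : dist s₁ s < ε := by
      rw [Real.dist_eq, abs_of_nonpos (by linarith)]
      have := lt_of_le_of_lt (le_max_left (s - ε) s') hs₁gt
      linarith
    have hzb : z s₁ < b := hball hd
    have hza₁ : z s₁ < a := by
      rcases hs₁S.2 with h | h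
      · exact h
      · linarith
    have hs₁S' : s₁ ∈ relaySet z a' b' t :=
      ⟨hs₁S.1, Or.inl (lt_of_lt_of_le hza₁ haa')⟩
    have : s₁ ≤ s' := le_csSup (relaySet_bddAbove z a' b' t) hs₁S'
    have := lt_of_le_of_lt (le_max_right (s - ε) s') hs₁gt
    linarith
  rw [relay_eq, if_pos hne, if_pos hgoal]

/-- If the input always stays above the lower threshold on `[0,t]` and the relay output
was `1` at time `τ ≤ t`, then the output is still `1` at time `t`. -/
lemma relay_one_persists {z : ℝ → ℝ} (hz : Continuous z) {a b t τ w : ℝ}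
    (hτt : τ ≤ t) (hgt : ∀ s ∈ Set.Icc (0:ℝ) t, a < z s)
    (h1 : relay a b z w τ = 1) : relay a b z w t = 1 := by
  by_cases hne : (relaySet z a b t).Nonempty
  · obtain ⟨hIcc, hdisj⟩ := relaySet_sSup_mem hz hne
    have hb : b ≤ z (sSup (relaySet z a b t)) := by
      rcases hdisj with h | h
      · exact absurd h (not_le.mpr (hgt _ hIcc))
      · exact h
    rw [relay_eq, if_pos hne, if_pos hb]
  · have hneτ : ¬ (relaySet z a b τ).Nonempty := by
      rintro ⟨x, hx1, hx2⟩
      exact hne ⟨x, ⟨hx1.1, hx1.2.trans hτt⟩, hx2⟩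
    rw [relay_eq, if_neg hneτ] at h1
    rw [relay_eq, if_neg hne]
    exact h1

theorem relay_superposition_staircase (k : ℕ) (hk : 1 ≤ k)
    (ζ : ℝ → ℝ) (hζ : Continuous ζ)
    (w₀ : Fin k → ℝ) (hw₀ : ∀ i, w₀ i = 1 ∨ w₀ i = -1)
    (hcompat : ∀ i : Fin k,
      (w₀ i = 1 → -1 + ((i.1 + 1 : ℕ) : ℝ) / k ≤ ζ 0) ∧
      (w₀ i = -1 → ζ 0 ≤ ((i.1 + 1 : ℕ) : ℝ) / k))
    (h : Fin k → ℝ → ℝ)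
    (hh : ∀ i : Fin k,
      h i = relay (-1 + ((i.1 + 1 : ℕ) : ℝ) / k) (((i.1 + 1 : ℕ) : ℝ) / k) ζ (w₀ i))
    (wk : ℝ → ℝ) (hwk : ∀ t, wk t = (1 / (k : ℝ)) * ∑ i, h i t)
    (τ : ℝ) (hτ : 0 ≤ τ)
    (hord : ∃ i₀ : ℕ, ∀ i : Fin k,
      (i.1 + 1 < i₀ → h i τ = 1) ∧ (i₀ < i.1 + 1 → h i τ = -1)) :
    (∀ t, τ ≤ t → ∃ j ≤ k,
      (∀ i : Fin k, h i t = if i.1 < j then 1 else -1) ∧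
      wk t = -1 + 2 * (j : ℝ) / k) ∧
    (∀ j j' : ℕ, j ≤ k → j' ≤ k →
      -1 + 2 * (j : ℝ) / k = -1 + 2 * (j' : ℝ) / k → j = j') := by
  have hk0 : (0:ℝ) < (k:ℝ) := by exact_mod_cast hk
  have hkne : (k:ℝ) ≠ 0 := ne_of_gt hk0
  -- notation for thresholds
  set B : Fin k → ℝ := fun i => ((i.1 + 1 : ℕ) : ℝ) / k with hB
  set A : Fin k → ℝ := fun i => -1 + ((i.1 + 1 : ℕ) : ℝ) / k with hA
  have hAB : ∀ i, A i + 1 = B i := fun i => by simp [hA, hB]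
  have hBmono : ∀ i i' : Fin k, i.1 < i'.1 → B i < B i' := by
    intro i i' hlt
    apply div_lt_div_of_pos_right _ hk0
    exact_mod_cast Nat.add_lt_add_right hlt 1
  have hAmono : ∀ i i' : Fin k, i.1 < i'.1 → A i < A i' := by
    intro i i' hlt
    have := hBmono i i' hlt
    simp only [hA]
    linarith [hAB i, hAB i']
  -- each relay output is ±1
  have hval : ∀ (i : Fin k) (t : ℝ), h i t = 1 ∨ h i t = -1 := by
    intro i t
    rw [hh i, relay]
    split
    · split
      · left; rfl
      · right; rfl
    · exact hw₀ i
  -- monotonicity of the outputs at times t ≥ τ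
  have hmono : ∀ t, τ ≤ t → ∀ i i' : Fin k, i.1 ≤ i'.1 → h i' t = 1 → h i t = 1 := by
    intro t hτt i i' hle hone
    rcases lt_or_eq_of_le hle with hlt | heq
    swap
    · have : i = i' := Fin.ext heq
      rw [this]; exact hone
    by_cases hne' : (relaySet ζ (A i') (B i') t).Nonempty
    · rw [hh i]
      exact relay_one_of_higher_one hζ (hAB i) (le_of_lt (hAmono i i' hlt))
        (hBmono i i' hlt) hne' (by rw [hh i'] at hone; exact hone)
    · -- the higher relay never switched; use the ordering at τ
      have hneτ' : ¬ (relaySet ζ (A i') (B i') τ).Nonempty := by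
        rintro ⟨x, hx1, hx2⟩
        exact hne' ⟨x, ⟨hx1.1, hx1.2.trans hτt⟩, hx2⟩
      have hw'1 : w₀ i' = 1 := by
        rw [hh i'] at hone
        rw [relay_eq, if_neg hne'] at hone
        exact hone
      have honeτ : h i' τ = 1 := by
        rw [hh i', relay_eq, if_neg hneτ']
        exact hw'1
      obtain ⟨i₀, hi₀⟩ := hord
      have hi'le : i'.1 + 1 ≤ i₀ := by
        by_contra hcon
        push_neg at hcon
        have := (hi₀ i').2 hcon
        rw [honeτ] at this
        norm_num at this
      have hiτ : h i τ = 1 := (hi₀ i).1 (by omega)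
      have hgt : ∀ s ∈ Set.Icc (0:ℝ) t, A i < ζ s := by
        intro s hs
        have h2 : A i' ≤ ζ s := by
          by_contra hc
          push_neg at hc
          exact hne' ⟨s, hs, Or.inl hc⟩
        exact lt_of_lt_of_le (hAmono i i' hlt) h2
      rw [hh i]
      exact relay_one_persists hζ hτt hgt (by rw [hh i] at hiτ; exact hiτ)
  constructor
  · intro t hτt
    -- the set of "on" relays
    set F : Finset (Fin k) := Finset.univ.filter (fun i => h i t = 1) with hF
    refine ⟨F.card, ?_, ?_, ?_⟩
    · calc F.card ≤ Finset.univ.card := Finset.card_filter_le _ _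
        _ = k := Finset.card_univ.trans (Fintype.card_fin k)
    · intro i
      by_cases hi : h i t = 1
      · rw [hi]
        have hsub : Finset.Iic i ⊆ F := by
          intro m hm
          rw [Finset.mem_Iic] at hm
          rw [hF, Finset.mem_filter]
          exact ⟨Finset.mem_univ m, hmono t hτt m i hm hi⟩
        have hcard : i.1 + 1 ≤ F.card := by
          have := Finset.card_le_card hsub
          rwa [Fin.card_Iic] at this
        rw [if_pos (by omega)]
      · have hi' : h i t = -1 := (hval i t).resolve_left hi
        rw [hi']
        have hsub : F ⊆ Finset.Iio i := by
          intro m hm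
          rw [hF, Finset.mem_filter] at hm
          rw [Finset.mem_Iio]
          by_contra hcon
          push_neg at hcon
          exact hi (hmono t hτt i m hcon hm.2)
        have hcard : F.card ≤ i.1 := by
          have := Finset.card_le_card hsub
          rwa [Fin.card_Iio] at this
        rw [if_neg (by omega)]
    · -- compute the sum
      have hFle : F.card ≤ k := by
        calc F.card ≤ Finset.univ.card := Finset.card_filter_le _ _
          _ = k := Finset.card_univ.trans (Fintype.card_fin k)
      have hsum : ∑ i, h i t = (F.card : ℝ) - ((k : ℝ) - F.card) := by
        have h1 : ∑ i, h i t = ∑ i ∈ F, h i t + ∑ i ∈ Fᶜ, h i t :=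
          (Finset.sum_add_sum_compl F _).symm
        have h2 : ∑ i ∈ F, h i t = (F.card : ℝ) := by
          rw [Finset.sum_congr rfl (fun i hi => (Finset.mem_filter.mp hi).2)]
          simp
          rfl
        have h3 : ∑ i ∈ Fᶜ, h i t = -((Fᶜ.card : ℝ)) := by
          have : ∀ i ∈ Fᶜ, h i t = -1 := by
            intro i hi
            rw [Finset.mem_compl, hF, Finset.mem_filter] at hi
            push_neg at hi
            exact (hval i t).resolve_left (hi (Finset.mem_univ i))
          rw [Finset.sum_congr rfl this]
          simp
        have h4 : (Fᶜ.card : ℝ) = (k : ℝ) - F.card := by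
          rw [Finset.card_compl]
          rw [Nat.cast_sub (by simpa using hFle)]
          simp
        rw [h1, h2, h3, h4]
        ring
      rw [hwk t, hsum]
      field_simp
      ring
  · intro j j' hj hj' heq
    field_simp at heq
    have h2 : (j:ℝ) = j' := by
      have := heq
      push_cast at this
      linarith
    exact_mod_cast h2
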